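/- For the IWP(2) covariance recursion, if C = σ²h⁵[[c₀₀,0,c₀₂],[0,0,0],[c₀₂,0,c₂₂]] is a valid covariance matrix, then after one Kalman predict–update step (with Pascal matrix propagation, rescaled diffusion Q̃(h), and exact update of the second component) the new covariance has the same structural form: its row and column with index 1 are zero, and in particular the new (2,2) coefficient equals (16c₂₂ + 1)/(16(12c₂₂ + 1)). -/

import Mathlib

open Matrix

/-- For the IWP(2) covariance recursion, if C = σ²h⁵[[c₀₀,0,c₀₂],[0,0,0],
[c₀₂,0,c₂₂]] is a valid covariance matrix, then after one Kalman predict–update step the new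
covariance has the same structural form: its row and column with index 1 are zero, and the
new (2,2) coefficient equals (16c₂₂ + 1)/(16(12c₂₂ + 1)). -/
theorem iwp2_covariance_recursion (σ h c00 c02 c22 : ℝ) (hσ : 0 < σ) (hh : 0 < h) :
    let P : Matrix (Fin 3) (Fin 3) ℝ := !![1, 1, 1; 0, 1, 2; 0, 0, 1]
    let Qt : Matrix (Fin 3) (Fin 3) ℝ := Matrix.of fun i j =>
      σ ^ 2 * h ^ 5 /
        (((5 - (i : ℕ) - (j : ℕ)) * (2 - (i : ℕ)).factorial * (2 - (j : ℕ)).factorial *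
          (i : ℕ).factorial * (j : ℕ).factorial : ℕ) : ℝ)
    let C : Matrix (Fin 3) (Fin 3) ℝ := (σ ^ 2 * h ^ 5) •
      !![c00, 0, c02; 0, 0, 0; c02, 0, c22]
    let Cpred : Matrix (Fin 3) (Fin 3) ℝ := P * C * Pᵀ + Qt
    let K : Fin 3 → ℝ := fun i => Cpred i 1 / Cpred 1 1
    let Cpost : Matrix (Fin 3) (Fin 3) ℝ :=
      Matrix.of fun i j => Cpred i j - K i * Cpred 1 1 * K j
    C.PosSemidef →
      (∀ i : Fin 3, Cpost i 1 = 0 ∧ Cpost 1 i = 0) ∧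
      Cpost 2 2 = σ ^ 2 * h ^ 5 * ((16 * c22 + 1) / (16 * (12 * c22 + 1))) := by
  intro P Qt C Cpred K Cpost hpsd
  have hs : 0 < σ ^ 2 * h ^ 5 := by positivity
  have hc22 : 0 ≤ c22 := by
    have h2 := (posSemidef_iff_dotProduct_mulVec.mp hpsd).2 (fun i => if i = 2 then 1 else 0)
    simp [C, dotProduct, Matrix.mulVec, Fin.sum_univ_three, Matrix.smul_apply,
      Fin.isValue] at h2
    nlinarith
  have e11 : Cpred 1 1 = σ ^ 2 * h ^ 5 * (12 * c22 + 1) / 3 := by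
    simp only [Cpred, Qt, C, P, Matrix.add_apply, Matrix.mul_apply, Fin.sum_univ_three,
      Matrix.transpose_apply, Matrix.smul_apply, Matrix.of_apply, Matrix.cons_val',
      Matrix.cons_val_zero, Matrix.cons_val_one, Matrix.head_cons, Matrix.empty_val',
      Matrix.cons_val_fin_one, Matrix.head_fin_const, Matrix.cons_val_two, Matrix.vecHead,
      Matrix.vecTail, Function.comp, smul_eq_mul]
    norm_num [Nat.factorial]; ring
  have e21 : Cpred 2 1 = σ ^ 2 * h ^ 5 * (8 * c22 + 1) / 4 := by
    simp only [Cpred, Qt, C, P, Matrix.add_apply, Matrix.mul_apply, Fin.sum_univ_three,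
      Matrix.transpose_apply, Matrix.smul_apply, Matrix.of_apply, Matrix.cons_val',
      Matrix.cons_val_zero, Matrix.cons_val_one, Matrix.head_cons, Matrix.empty_val',
      Matrix.cons_val_fin_one, Matrix.head_fin_const, Matrix.cons_val_two, Matrix.vecHead,
      Matrix.vecTail, Function.comp, smul_eq_mul]
    norm_num [Nat.factorial]; ring
  have e22 : Cpred 2 2 = σ ^ 2 * h ^ 5 * (4 * c22 + 1) / 4 := by
    simp only [Cpred, Qt, C, P, Matrix.add_apply, Matrix.mul_apply, Fin.sum_univ_three,
      Matrix.transpose_apply, Matrix.smul_apply, Matrix.of_apply, Matrix.cons_val',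
      Matrix.cons_val_zero, Matrix.cons_val_one, Matrix.head_cons, Matrix.empty_val',
      Matrix.cons_val_fin_one, Matrix.head_fin_const, Matrix.cons_val_two, Matrix.vecHead,
      Matrix.vecTail, Function.comp, smul_eq_mul]
    norm_num [Nat.factorial]; ring
  have hsym : ∀ i : Fin 3, Cpred 1 i = Cpred i 1 := by
    intro i
    fin_cases i <;>
    · simp only [Cpred, Qt, C, P, Matrix.add_apply, Matrix.mul_apply, Fin.sum_univ_three,
        Matrix.transpose_apply, Matrix.smul_apply, Matrix.of_apply, Matrix.cons_val',
        Matrix.cons_val_zero, Matrix.cons_val_one, Matrix.head_cons, Matrix.empty_val',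
        Matrix.cons_val_fin_one, Matrix.head_fin_const, Matrix.cons_val_two, Matrix.vecHead,
        Matrix.vecTail, Function.comp, smul_eq_mul]
      norm_num [Nat.factorial] <;> ring
  have h12 : (0:ℝ) < 12 * c22 + 1 := by linarith
  have hdne : Cpred 1 1 ≠ 0 := by rw [e11]; positivity
  constructor
  · intro i
    constructor
    · show Cpred i 1 - Cpred i 1 / Cpred 1 1 * Cpred 1 1 * (Cpred 1 1 / Cpred 1 1) = 0
      rw [div_self hdne, mul_one, div_mul_cancel₀ _ hdne, sub_self]
    · show Cpred 1 i - Cpred 1 1 / Cpred 1 1 * Cpred 1 1 * (Cpred i 1 / Cpred 1 1) = 0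
      rw [div_self hdne, one_mul, ← mul_div_assoc, mul_div_cancel_left₀ _ hdne, hsym, sub_self]
  · show Cpred 2 2 - Cpred 2 1 / Cpred 1 1 * Cpred 1 1 * (Cpred 2 1 / Cpred 1 1) = _
    rw [e11, e21, e22]
    have hsne := hs.ne'
    have h12ne := h12.ne'
    field_simp
    ring
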